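/- arXiv:2504.06937 — 3 statements merged into one kernel-verified Lean document; each statement's English description precedes it below -/
import Mathlib

section
/- Fix positive reals γ_a, positive integers K, Q, m with K·J + Q relevant, and a positive integer J. The function f(μ₁, μ₂) = (KJ/2)·log₂(1 + μ₁γ_a) + (Q/2)·log₂(1 + J·μ₂·γ_a) subject to K·μ₁ + Q·μ₂ = m and μ₁, μ₂ ≥ 0 is maximized at μ₁ = J·m/(KJ + Q) and μ₂ = m/(KJ + Q), with maximum value ((KJ + Q)/2)·log₂(1 + J·m·γ_a/(KJ + Q)). In particular the optimal ratio μ₁/μ₂ equals J. -/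
lemma weighted_log_le (w₁ w₂ x y : ℝ) (hw₁ : 0 ≤ w₁) (hw₂ : 0 ≤ w₂)
    (hw : w₁ + w₂ = 1) (hx : 0 < x) (hy : 0 < y) :
    w₁ * Real.log x + w₂ * Real.log y ≤ Real.log (w₁ * x + w₂ * y) := by
  have h := Real.geom_mean_le_arith_mean2_weighted hw₁ hw₂ hx.le hy.le hw
  have hlog : Real.log (x ^ w₁ * y ^ w₂) = w₁ * Real.log x + w₂ * Real.log y := by
    rw [Real.log_mul (by positivity) (by positivity), Real.log_rpow hx, Real.log_rpow hy]
  calc w₁ * Real.log x + w₂ * Real.log y = Real.log (x ^ w₁ * y ^ w₂) := hlog.symm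
    _ ≤ Real.log (w₁ * x + w₂ * y) := Real.log_le_log (by positivity) h

/-- Multiuser FF-TDMA capacity: under `K·μ₁ + Q·μ₂ = m`, the sum capacity
`(KJ/2)log₂(1+μ₁γ) + (Q/2)log₂(1+Jμ₂γ)` is maximized at
`μ₁ = J·m/(KJ+Q)`, `μ₂ = m/(KJ+Q)`, achieving
`((KJ+Q)/2)·log₂(1 + J·m·γ/(KJ+Q))`; the optimal ratio `μ₁/μ₂` equals `J`. -/
theorem mu_fftdma_capacity (γ : ℝ) (hγ : 0 < γ) (m : ℝ) (hm : 0 < m)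
    (K Q J : ℕ) (hK : 0 < K) (hQ : 0 < Q) (hJ : 0 < J) :
    (∀ μ₁ μ₂ : ℝ, 0 ≤ μ₁ → 0 ≤ μ₂ → (K : ℝ) * μ₁ + Q * μ₂ = m →
      ((K : ℝ) * J / 2) * Real.logb 2 (1 + μ₁ * γ) +
          ((Q : ℝ) / 2) * Real.logb 2 (1 + J * μ₂ * γ) ≤
        ((K : ℝ) * J + Q) / 2 *
          Real.logb 2 (1 + J * m * γ / ((K : ℝ) * J + Q))) ∧
    (K : ℝ) * ((J : ℝ) * m / ((K : ℝ) * J + Q)) + Q * (m / ((K : ℝ) * J + Q)) = m ∧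
    ((K : ℝ) * J / 2) * Real.logb 2 (1 + ((J : ℝ) * m / ((K : ℝ) * J + Q)) * γ) +
        ((Q : ℝ) / 2) * Real.logb 2 (1 + J * (m / ((K : ℝ) * J + Q)) * γ) =
      ((K : ℝ) * J + Q) / 2 * Real.logb 2 (1 + J * m * γ / ((K : ℝ) * J + Q)) ∧
    ((J : ℝ) * m / ((K : ℝ) * J + Q)) / (m / ((K : ℝ) * J + Q)) = J := by
  have hKp : (0:ℝ) < K := Nat.cast_pos.mpr hK
  have hQp : (0:ℝ) < Q := Nat.cast_pos.mpr hQ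
  have hJp : (0:ℝ) < J := Nat.cast_pos.mpr hJ
  have hs : (0:ℝ) < (K:ℝ) * J + Q := by positivity
  have hsne : ((K:ℝ) * J + Q) ≠ 0 := ne_of_gt hs
  refine ⟨?_, by field_simp, ?_, by field_simp⟩
  · intro μ₁ μ₂ h₁ h₂ hc
    have hx : (0:ℝ) < 1 + μ₁ * γ := by positivity
    have hy : (0:ℝ) < 1 + (J:ℝ) * μ₂ * γ := by positivity
    have key := weighted_log_le ((K:ℝ)*J/((K:ℝ)*J+Q)) ((Q:ℝ)/((K:ℝ)*J+Q))
      (1 + μ₁ * γ) (1 + (J:ℝ) * μ₂ * γ) (by positivity) (by positivity)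
      (by field_simp) hx hy
    have harg : (K:ℝ)*J/((K:ℝ)*J+Q) * (1 + μ₁ * γ) + (Q:ℝ)/((K:ℝ)*J+Q) * (1 + (J:ℝ) * μ₂ * γ)
        = 1 + (J:ℝ) * m * γ / ((K:ℝ)*J+Q) := by
      rw [← hc]; field_simp; ring
    rw [harg] at key
    have hlog2 : (0:ℝ) < Real.log 2 := Real.log_pos (by norm_num)
    have key2 : (K:ℝ)*J*Real.log (1+μ₁*γ) + Q*Real.log (1+(J:ℝ)*μ₂*γ) ≤
        ((K:ℝ)*J+Q)*Real.log (1+(J:ℝ)*m*γ/((K:ℝ)*J+Q)) := by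
      have h := mul_le_mul_of_nonneg_left key hs.le
      have e : ((K:ℝ)*J+Q)*((K:ℝ)*J/((K:ℝ)*J+Q) * Real.log (1+μ₁*γ) +
          (Q:ℝ)/((K:ℝ)*J+Q) * Real.log (1+(J:ℝ)*μ₂*γ)) =
          (K:ℝ)*J*Real.log (1+μ₁*γ) + Q*Real.log (1+(J:ℝ)*μ₂*γ) := by
        field_simp
      rw [e] at h; exact h
    simp only [Real.logb]
    have eL : (K:ℝ)*J/2*(Real.log (1+μ₁*γ)/Real.log 2) +
        (Q:ℝ)/2*(Real.log (1+(J:ℝ)*μ₂*γ)/Real.log 2) =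
        ((K:ℝ)*J*Real.log (1+μ₁*γ) + Q*Real.log (1+(J:ℝ)*μ₂*γ))/(2*Real.log 2) := by ring
    have eR : ((K:ℝ)*J+Q)/2*(Real.log (1+(J:ℝ)*m*γ/((K:ℝ)*J+Q))/Real.log 2) =
        (((K:ℝ)*J+Q)*Real.log (1+(J:ℝ)*m*γ/((K:ℝ)*J+Q)))/(2*Real.log 2) := by ring
    rw [eL, eR]
    gcongr
  · have e1 : 1 + (J:ℝ) * m / ((K:ℝ)*J+Q) * γ = 1 + (J:ℝ) * m * γ / ((K:ℝ)*J+Q) := by ring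
    have e2 : 1 + (J:ℝ) * (m / ((K:ℝ)*J+Q)) * γ = 1 + (J:ℝ) * m * γ / ((K:ℝ)*J+Q) := by ring
    rw [e1, e2]; ring
end

section
/- Fix positive reals γ_a, positive integers K, Q, R, N, J, T, J_mc with J = J_mc·T. The function f(μ₁, μ₂, μ_c) = (KJ/2)log₂(1+μ₁γ_a) + (QT/2)log₂(1+J_mc μ₂ γ_a) + (R/2)log₂(1+J μ_c γ_a) subject to K μ₁ + Q μ₂ + R μ_c = N and nonnegativity is maximized at μ_c = N/(KJ + QT + R), μ₁ = J·μ_c, μ₂ = T·μ_c, achieving ((KJ + QT + R)/2)·log₂(1 + N·J·γ_a/(KJ + QT + R)), and at the optimum μ₁/μ₂ = J_mc. -/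
/-- Multiuser FF-CCMA capacity: with `J = J_mc·T` users and power constraint
`K·μ₁ + Q·μ₂ + R·μ_c = N`, the sum capacity
`(KJ/2)log₂(1+μ₁γ) + (QT/2)log₂(1+J_mc μ₂ γ) + (R/2)log₂(1+J μ_c γ)` is
maximized at `μ_c = N/(KJ+QT+R)`, `μ₁ = J·μ_c`, `μ₂ = T·μ_c`, achieving
`((KJ+QT+R)/2)·log₂(1 + N·J·γ/(KJ+QT+R))`, and at the optimum `μ₁/μ₂ = J_mc`. -/
theorem mu_ffccma_capacity (γ : ℝ) (hγ : 0 < γ) (K Q R N J T Jmc : ℕ)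
    (hK : 0 < K) (hQ : 0 < Q) (hR : 0 < R) (hN : 0 < N)
    (hT : 0 < T) (hJmc : 0 < Jmc) (hJ : J = Jmc * T) :
    (∀ μ₁ μ₂ μc : ℝ, 0 ≤ μ₁ → 0 ≤ μ₂ → 0 ≤ μc →
      (K : ℝ) * μ₁ + Q * μ₂ + R * μc = N →
      ((K : ℝ) * J / 2) * Real.logb 2 (1 + μ₁ * γ) +
          ((Q : ℝ) * T / 2) * Real.logb 2 (1 + Jmc * μ₂ * γ) +
          ((R : ℝ) / 2) * Real.logb 2 (1 + J * μc * γ) ≤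
        ((K : ℝ) * J + Q * T + R) / 2 *
          Real.logb 2 (1 + (N : ℝ) * J * γ / ((K : ℝ) * J + Q * T + R))) ∧
    (K : ℝ) * ((J : ℝ) * ((N : ℝ) / ((K : ℝ) * J + Q * T + R))) +
        Q * ((T : ℝ) * ((N : ℝ) / ((K : ℝ) * J + Q * T + R))) +
        R * ((N : ℝ) / ((K : ℝ) * J + Q * T + R)) = N ∧
    ((K : ℝ) * J / 2) *
        Real.logb 2 (1 + (J : ℝ) * ((N : ℝ) / ((K : ℝ) * J + Q * T + R)) * γ) +
        ((Q : ℝ) * T / 2) *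
          Real.logb 2
            (1 + (Jmc : ℝ) * ((T : ℝ) * ((N : ℝ) / ((K : ℝ) * J + Q * T + R))) * γ) +
        ((R : ℝ) / 2) *
          Real.logb 2 (1 + (J : ℝ) * ((N : ℝ) / ((K : ℝ) * J + Q * T + R)) * γ) =
      ((K : ℝ) * J + Q * T + R) / 2 *
        Real.logb 2 (1 + (N : ℝ) * J * γ / ((K : ℝ) * J + Q * T + R)) ∧
    ((J : ℝ) * ((N : ℝ) / ((K : ℝ) * J + Q * T + R))) /
        ((T : ℝ) * ((N : ℝ) / ((K : ℝ) * J + Q * T + R))) = Jmc := by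
  have hJpos : 0 < J := hJ ▸ Nat.mul_pos hJmc hT
  have hJR : (J : ℝ) = (Jmc : ℝ) * T := by exact_mod_cast congrArg Nat.cast hJ
  have hKr : (0:ℝ) < K := by exact_mod_cast hK
  have hQr : (0:ℝ) < Q := by exact_mod_cast hQ
  have hRr : (0:ℝ) < R := by exact_mod_cast hR
  have hNr : (0:ℝ) < N := by exact_mod_cast hN
  have hTr : (0:ℝ) < T := by exact_mod_cast hT
  have hJr : (0:ℝ) < J := by exact_mod_cast hJpos
  have hJmcr : (0:ℝ) < Jmc := by exact_mod_cast hJmc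
  set S : ℝ := (K : ℝ) * J + Q * T + R with hSdef
  have hS : 0 < S := by
    have h1 : 0 < (K:ℝ)*J := mul_pos hKr hJr
    have h2 : 0 < (Q:ℝ)*T := mul_pos hQr hTr
    linarith
  have hS' : S ≠ 0 := ne_of_gt hS
  have hlog2 : 0 < Real.log 2 := Real.log_pos (by norm_num)
  refine ⟨?_, ?_, ?_, ?_⟩
  · intro μ₁ μ₂ μc h1 h2 h3 hcon
    have hx1 : (0:ℝ) < 1 + μ₁ * γ := by nlinarith
    have hx2 : (0:ℝ) < 1 + Jmc * μ₂ * γ := by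
      have := mul_nonneg (mul_nonneg hJmcr.le h2) hγ.le; linarith
    have hx3 : (0:ℝ) < 1 + J * μc * γ := by
      have := mul_nonneg (mul_nonneg hJr.le h3) hγ.le; linarith
    have h₀ : ∀ i ∈ Finset.univ, 0 ≤ (![(K:ℝ)*J/S, (Q:ℝ)*T/S, (R:ℝ)/S]) i := by
      intro i _
      fin_cases i
      · simpa using div_nonneg (by positivity) hS.le
      · simpa using div_nonneg (by positivity) hS.le
      · simpa using div_nonneg (by positivity) hS.le
    have h₁ : ∑ i : Fin 3, (![(K:ℝ)*J/S, (Q:ℝ)*T/S, (R:ℝ)/S]) i = 1 := by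
      simp only [Fin.sum_univ_three, Matrix.cons_val_zero, Matrix.cons_val_one,
        Matrix.head_cons, Matrix.cons_val_two, Matrix.tail_cons]
      rw [← add_div, ← add_div, div_eq_one_iff_eq hS']
    have hmem : ∀ i ∈ Finset.univ,
        (![1 + μ₁*γ, 1 + (Jmc:ℝ)*μ₂*γ, 1 + (J:ℝ)*μc*γ]) i ∈ Set.Ioi (0:ℝ) := by
      intro i _
      fin_cases i
      · simpa using hx1
      · simpa using hx2
      · simpa using hx3
    have hjen := (strictConcaveOn_log_Ioi.concaveOn).le_map_sum h₀ h₁ hmem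
    have hpoly : (K:ℝ)*J*(1 + μ₁*γ) + (Q:ℝ)*T*(1 + Jmc*μ₂*γ) + (R:ℝ)*(1 + J*μc*γ)
        = S + (N:ℝ)*J*γ := by
      rw [hSdef]
      linear_combination γ * (J:ℝ) * hcon - γ * (Q:ℝ) * μ₂ * hJR
    have hsum : ∑ i : Fin 3, (![(K:ℝ)*J/S, (Q:ℝ)*T/S, (R:ℝ)/S]) i •
        (![1 + μ₁*γ, 1 + (Jmc:ℝ)*μ₂*γ, 1 + (J:ℝ)*μc*γ]) i = 1 + (N:ℝ)*J*γ/S := by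
      simp only [Fin.sum_univ_three, Matrix.cons_val_zero, Matrix.cons_val_one,
        Matrix.head_cons, Matrix.cons_val_two, Matrix.tail_cons, smul_eq_mul]
      have : (K:ℝ)*J/S*(1 + μ₁*γ) + (Q:ℝ)*T/S*(1 + Jmc*μ₂*γ) + (R:ℝ)/S*(1 + J*μc*γ)
          = ((K:ℝ)*J*(1 + μ₁*γ) + (Q:ℝ)*T*(1 + Jmc*μ₂*γ) + (R:ℝ)*(1 + J*μc*γ))/S := by
        ring
      rw [this, hpoly, add_div, div_self hS']
    rw [hsum] at hjen
    have hexp : ∑ i : Fin 3, (![(K:ℝ)*J/S, (Q:ℝ)*T/S, (R:ℝ)/S]) i •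
        Real.log ((![1 + μ₁*γ, 1 + (Jmc:ℝ)*μ₂*γ, 1 + (J:ℝ)*μc*γ]) i)
        = ((K:ℝ)*J*Real.log (1 + μ₁*γ) + (Q:ℝ)*T*Real.log (1 + Jmc*μ₂*γ)
            + (R:ℝ)*Real.log (1 + J*μc*γ))/S := by
      simp only [Fin.sum_univ_three, Matrix.cons_val_zero, Matrix.cons_val_one,
        Matrix.head_cons, Matrix.cons_val_two, Matrix.tail_cons, smul_eq_mul]
      ring
    rw [hexp] at hjen
    have key : (K:ℝ)*J*Real.log (1 + μ₁*γ) + (Q:ℝ)*T*Real.log (1 + Jmc*μ₂*γ)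
        + (R:ℝ)*Real.log (1 + J*μc*γ) ≤ S * Real.log (1 + (N:ℝ)*J*γ/S) := by
      have := (div_le_iff₀ hS).mp hjen
      linarith [this]
    have hrw : ∀ c x : ℝ, c / 2 * Real.logb 2 x = c * Real.log x / (2 * Real.log 2) := by
      intro c x; rw [Real.logb]; ring
    rw [hrw ((K:ℝ)*J), hrw ((Q:ℝ)*T), hrw (R:ℝ), hrw S]
    rw [← add_div, ← add_div]
    have hden : (0:ℝ) < 2 * Real.log 2 := by positivity
    exact div_le_div_of_nonneg_right key hden.le
  · field_simp
    ring
  · have e1 : 1 + (J:ℝ) * ((N:ℝ)/S) * γ = 1 + (N:ℝ)*J*γ/S := by ring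
    have e2 : 1 + (Jmc:ℝ) * ((T:ℝ)*((N:ℝ)/S)) * γ = 1 + (N:ℝ)*J*γ/S := by
      rw [hJR]; ring
    rw [e1, e2]; ring
  · have hx : (T:ℝ) * ((N:ℝ)/S) ≠ 0 := by
      have : (0:ℝ) < (T:ℝ) * ((N:ℝ)/S) := mul_pos hTr (div_pos hNr hS)
      exact ne_of_gt this
    rw [div_eq_iff hx, hJR]; ring
end

section
/- Let S^1 and S^2 be the 3×2 complex matrices S^1 = [[1,1],[−1,1],[0,1]] and S^2 = [[−1,−1],[1,−1],[i,−1]], and let S^0 be the 3×2 zero matrix. For a digit vector d = (d_1,d_2,d_3) ∈ {0,1,2}^3 define r(d) ∈ ℂ^2 as the sum over j of row j of S^{d_j}. Then r is injective on {0,1,2}^3, i.e., the 27 complex sum-patterns are pairwise distinct. -/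
open Complex in
/-- The complex generator matrices of Example 7's 3-user ternary NO-CWEA code. -/
noncomputable def noCweaS : Fin 3 → Matrix (Fin 3) (Fin 2) ℂ :=
  ![!![0, 0; 0, 0; 0, 0],
    !![1, 1; -1, 1; 0, 1],
    !![-1, -1; 1, -1; Complex.I, -1]]

/-- Integer (re, im) version of the generator matrices. -/
def noCweaSInt : Fin 3 → Matrix (Fin 3) (Fin 2) (ℤ × ℤ) :=
  ![!![(0,0), (0,0); (0,0), (0,0); (0,0), (0,0)],
    !![(1,0), (1,0); (-1,0), (1,0); (0,0), (1,0)],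
    !![(-1,0), (-1,0); (1,0), (-1,0); (0,1), (-1,0)]]

lemma noCweaS_eq (k : Fin 3) (j : Fin 3) (i : Fin 2) :
    noCweaS k j i = ((noCweaSInt k j i).1 : ℂ) + ((noCweaSInt k j i).2 : ℂ) * Complex.I := by
  fin_cases k <;> fin_cases j <;> fin_cases i <;>
    simp [noCweaS, noCweaSInt, Matrix.vecHead, Matrix.vecTail]

lemma intInj :
    Function.Injective
      (fun d : Fin 3 → Fin 3 => (fun i : Fin 2 => ∑ j : Fin 3, noCweaSInt (d j) j i)) := by
  decide

/-- USPM constraint in the complex field for Example 7: the map sending a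
digit vector `d ∈ {0,1,2}³` to the complex sum-pattern
`r(d) = Σⱼ (row j of S^{dⱼ})` is injective, i.e. the 27 complex
sum-patterns are pairwise distinct. -/
theorem no_cwea_complex_uspm :
    Function.Injective
      (fun d : Fin 3 → Fin 3 => (fun i : Fin 2 => ∑ j : Fin 3, noCweaS (d j) j i)) := by
  intro d₁ d₂ h
  apply intInj
  funext i
  have h' := congrFun h i
  simp only [noCweaS_eq] at h'
  have h1 : ((∑ j : Fin 3, (noCweaSInt (d₁ j) j i).1 : ℤ) : ℂ)
      + ((∑ j : Fin 3, (noCweaSInt (d₁ j) j i).2 : ℤ) : ℂ) * Complex.I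
      = ((∑ j : Fin 3, (noCweaSInt (d₂ j) j i).1 : ℤ) : ℂ)
      + ((∑ j : Fin 3, (noCweaSInt (d₂ j) j i).2 : ℤ) : ℂ) * Complex.I := by
    push_cast
    simpa [Finset.sum_add_distrib, Finset.sum_mul] using h'
  rw [Complex.ext_iff] at h1
  simp [Complex.add_re, Complex.add_im] at h1
  obtain ⟨hre, him⟩ := h1
  have hre' : (∑ j : Fin 3, (noCweaSInt (d₁ j) j i).1)
      = ∑ j : Fin 3, (noCweaSInt (d₂ j) j i).1 := by exact_mod_cast hre
  have him' : (∑ j : Fin 3, (noCweaSInt (d₁ j) j i).2)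
      = ∑ j : Fin 3, (noCweaSInt (d₂ j) j i).2 := by exact_mod_cast him
  have : (∑ j : Fin 3, noCweaSInt (d₁ j) j i)
      = ∑ j : Fin 3, noCweaSInt (d₂ j) j i := by
    rw [Prod.ext_iff]
    constructor <;> simp [Prod.fst_sum, Prod.snd_sum, hre', him']
  exact this
end
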